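/- Let k ⊆ k' be a finite field extension, G a finite group, and M, N finitely generated kG-modules. If k' ⊗_k M is isomorphic to a direct summand of k' ⊗_k N as k'G-modules, then M is isomorphic to a direct summand of N as kG-modules (Noether–Deuring theorem). -/

import Mathlib

open TensorProduct

noncomputable section

set_option maxHeartbeats 1000000
set_option linter.unusedSectionVars false
set_option linter.unusedVariables false
open Module

open Module

noncomputable section ND

/-- Indecomposability of an `A`-module. -/
def Indec (A M : Type) [Ring A] [AddCommGroup M] [Module A M] : Prop :=
  Nontrivial M ∧ ∀ p q : Submodule A M, IsCompl p q → p = ⊥ ∨ q = ⊥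

theorem indec_of_equiv {A M M' : Type} [Ring A] [AddCommGroup M] [Module A M]
    [AddCommGroup M'] [Module A M'] (e : M ≃ₗ[A] M') (h : Indec A M) : Indec A M' := by
  obtain ⟨hnt, hind⟩ := h
  refine ⟨e.symm.toEquiv.nontrivial, fun p q hc => ?_⟩
  let o : Submodule A M ≃o Submodule A M' := Submodule.orderIsoMapComap e
  have hc' : IsCompl (o.symm p) (o.symm q) := by
    constructor
    · rw [disjoint_iff, ← o.symm.map_inf, hc.inf_eq_bot, o.symm.map_bot]
    · rw [codisjoint_iff, ← o.symm.map_sup, hc.sup_eq_top, o.symm.map_top]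
  rcases hind _ _ hc' with h1 | h1
  · left
    have := congrArg o h1
    rwa [o.apply_symm_apply, o.map_bot] at this
  · right
    have := congrArg o h1
    rwa [o.apply_symm_apply, o.map_bot] at this

variable {k A M : Type} [Field k] [Ring A] [Algebra k A] [AddCommGroup M] [Module k M]
  [Module A M] [IsScalarTower k A M] [FiniteDimensional k M]

theorem ND_isNoetherian (k : Type) [Field k] [Algebra k A] [Module k M]
    [IsScalarTower k A M] [FiniteDimensional k M] : IsNoetherian A M :=
  isNoetherian_of_tower k inferInstance

theorem ND_isArtinian (k : Type) [Field k] [Algebra k A] [Module k M]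
    [IsScalarTower k A M] [FiniteDimensional k M] : IsArtinian A M :=
  isArtinian_of_tower k inferInstance

/-- Every endomorphism of a finite-dimensional indecomposable module is a unit or nilpotent. -/
theorem ND_unit_or_nilpotent (k : Type) [Field k] [Algebra k A] [Module k M]
    [IsScalarTower k A M] [FiniteDimensional k M]
    (hM : Indec A M) (f : M →ₗ[A] M) :
    IsUnit f ∨ IsNilpotent f := by
  haveI := ND_isNoetherian (A := A) (M := M) k
  haveI := ND_isArtinian (A := A) (M := M) k
  obtain ⟨n, hn, hnpos⟩ :=
    ((f.eventually_isCompl_ker_pow_range_pow).and (Filter.eventually_gt_atTop 0)).exists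
  rcases hM.2 _ _ hn with h | h
  · left
    have hinj : Function.Injective (f ^ n) := by
      exact LinearMap.ker_eq_bot.mp h
    have hinjf : Function.Injective f := by
      intro x y hxy
      apply hinj
      obtain ⟨m, rfl⟩ := Nat.exists_eq_succ_of_ne_zero hnpos.ne'
      rw [pow_succ]
      simpa [Module.End.mul_apply] using congrArg (f ^ m) hxy
    have hsurj : Function.Surjective f :=
      IsArtinian.surjective_of_injective_endomorphism f hinjf
    exact (Module.End.isUnit_iff f).mpr ⟨hinjf, hsurj⟩
  · right
    exact ⟨n, LinearMap.range_eq_bot.mp h⟩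

theorem ND_isUnit_or_isUnit (k : Type) [Field k] [Algebra k A] [Module k M]
    [IsScalarTower k A M] [FiniteDimensional k M] (hM : Indec A M) {x y : Module.End A M}
    (h : IsUnit (x + y)) : IsUnit x ∨ IsUnit y := by
  by_contra hc
  push_neg at hc
  obtain ⟨hx, hy⟩ := hc
  set u := h.unit with hu
  have hux : ¬ IsUnit ((↑u⁻¹ : Module.End A M) * x) := by
    intro hun
    apply hx
    have : x = (↑u : Module.End A M) * ((↑u⁻¹ : Module.End A M) * x) := by
      rw [← mul_assoc, u.mul_inv, one_mul]
    rw [this]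
    exact (Units.isUnit u).mul hun
  have hnil : IsNilpotent ((↑u⁻¹ : Module.End A M) * x) := by
    rcases ND_unit_or_nilpotent (A := A) (M := M) k hM _ with h1 | h1
    · exact absurd h1 hux
    · exact h1
  have hone : ((↑u⁻¹ : Module.End A M) * y) = 1 - (↑u⁻¹ : Module.End A M) * x := by
    have h2 : (↑u⁻¹ : Module.End A M) * (x + y) = 1 := by
      rw [show ((x + y : Module.End A M)) = ↑u from (IsUnit.unit_spec h).symm, u.inv_mul]
    rw [eq_sub_iff_add_eq, ← mul_add, add_comm y x, h2]
  apply hy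
  have hyu : IsUnit ((↑u⁻¹ : Module.End A M) * y) := by
    rw [hone]; exact hnil.isUnit_one_sub
  have : y = (↑u : Module.End A M) * ((↑u⁻¹ : Module.End A M) * y) := by
    rw [← mul_assoc, u.mul_inv, one_mul]
  rw [this]
  exact (Units.isUnit u).mul hyu

theorem ND_exists_isUnit_of_sum (k : Type) [Field k] [Algebra k A] [Module k M]
    [IsScalarTower k A M] [FiniteDimensional k M] (hM : Indec A M) {ι : Type} (s : Finset ι)
    (h : ι → Module.End A M) (hs : IsUnit (∑ j ∈ s, h j)) : ∃ j ∈ s, IsUnit (h j) := by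
  haveI : Nontrivial M := hM.1
  classical
  induction s using Finset.induction_on with
  | empty =>
    simp only [Finset.sum_empty] at hs
    refine absurd hs ?_
    simp only [isUnit_zero_iff]
    intro h01
    obtain ⟨m, m', hmm⟩ := exists_pair_ne M
    apply hmm
    calc m = (1 : Module.End A M) m := (Module.End.one_apply m).symm
    _ = (0 : Module.End A M) m := by rw [← h01]
    _ = (0 : Module.End A M) m' := by rw [LinearMap.zero_apply, LinearMap.zero_apply]
    _ = (1 : Module.End A M) m' := by rw [h01]
    _ = m' := Module.End.one_apply m'
  | @insert a s' hj ih =>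
    rw [Finset.sum_insert hj] at hs
    rcases ND_isUnit_or_isUnit (A := A) (M := M) k hM hs with h1 | h1
    · exact ⟨a, Finset.mem_insert_self a s', h1⟩
    · obtain ⟨j, hjs, hju⟩ := ih h1
      exact ⟨j, Finset.mem_insert_of_mem hjs, hju⟩

-- finrank of an A-submodule, viewed over k
theorem ND_finrank_restrict {M : Type} [AddCommGroup M] [Module k M] [Module A M]
    [IsScalarTower k A M] (p : Submodule A M) :
    finrank k ↥(p.restrictScalars k) = finrank k ↥p :=
  ((Submodule.restrictScalarsEquiv k A M p).restrictScalars k).finrank_eq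

theorem ND_findim_submodule {M : Type} [AddCommGroup M] [Module k M] [Module A M]
    [IsScalarTower k A M] [FiniteDimensional k M] (p : Submodule A M) :
    FiniteDimensional k ↥p :=
  Module.Finite.equiv ((Submodule.restrictScalarsEquiv k A M p).restrictScalars k)

theorem ND_finrank_lt {M : Type} [AddCommGroup M] [Module k M] [Module A M]
    [IsScalarTower k A M] [FiniteDimensional k M] {p : Submodule A M} (hp : p ≠ ⊤) :
    finrank k ↥p < finrank k M := by
  rw [← ND_finrank_restrict (k := k) p]
  refine Submodule.finrank_lt (K := k) (V := M) ?_
  intro htop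
  apply hp
  ext x
  constructor
  · intro _; trivial
  · intro _
    have : x ∈ (p.restrictScalars k) := by rw [htop]; trivial
    exact this

theorem ND_exists_indec_compl (n : ℕ) :
    ∀ (M : Type) [AddCommGroup M] [Module k M] [Module A M] [IsScalarTower k A M]
    [FiniteDimensional k M], finrank k M ≤ n → Nontrivial M →
    ∃ p q : Submodule A M, IsCompl p q ∧ Indec A ↥p := by
  induction n with
  | zero =>
    intro M _ _ _ _ _ hr hnt
    exfalso
    have h0 : finrank k M = 0 := Nat.le_zero.mp hr
    rw [finrank_zero_iff] at h0
    exact not_subsingleton_iff_nontrivial.mpr hnt h0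
  | succ n IH =>
    intro M _ _ _ _ _ hr hnt
    by_cases hM : Indec A M
    · refine ⟨⊤, ⊥, isCompl_top_bot, ?_⟩
      exact indec_of_equiv (Submodule.topEquiv (R := A) (M := M)).symm hM
    · have hex : ∃ p q : Submodule A M, IsCompl p q ∧ p ≠ ⊥ ∧ q ≠ ⊥ := by
        rw [Indec, not_and] at hM
        have := hM hnt
        push_neg at this
        obtain ⟨p, q, hc, hp, hq⟩ := this
        exact ⟨p, q, hc, hp, hq⟩
      obtain ⟨p, q, hc, hp, hq⟩ := hex
      haveI : FiniteDimensional k ↥p := ND_findim_submodule p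
      have hptop : p ≠ ⊤ := by
        intro htop
        apply hq
        have := hc.disjoint
        rw [htop, disjoint_comm, disjoint_top] at this
        exact this
      have hrp : finrank k ↥p ≤ n := by
        have h1 := ND_finrank_lt (k := k) (A := A) hptop
        omega
      have hpnt : Nontrivial ↥p := Submodule.nontrivial_iff_ne_bot.mpr hp
      obtain ⟨p', q', hc', hind⟩ := IH ↥p hrp hpnt
      refine ⟨p'.map p.subtype, (q'.map p.subtype) ⊔ q, ⟨?_, ?_⟩, ?_⟩
      · -- disjoint
        rw [Submodule.disjoint_def]
        intro x hx1 hx2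
        rw [Submodule.mem_sup] at hx2
        obtain ⟨y, hy, z, hz, rfl⟩ := hx2
        have hxp : y + z ∈ p := Submodule.map_subtype_le p p' hx1
        have hyp : y ∈ p := Submodule.map_subtype_le p q' hy
        have hzp : z ∈ p := by
          have hzz : z = (y + z) - y := by abel
          rw [hzz]; exact Submodule.sub_mem p hxp hyp
        have hz0 : z = 0 := (Submodule.disjoint_def.mp hc.disjoint) z hzp hz
        rw [hz0, add_zero] at hx1 ⊢
        have hmem : y ∈ (p'.map p.subtype) ⊓ (q'.map p.subtype) := ⟨hx1, hy⟩
        rw [← Submodule.map_inf _ (Submodule.injective_subtype p), hc'.inf_eq_bot,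
          Submodule.map_bot] at hmem
        exact hmem
      · -- codisjoint
        rw [codisjoint_iff, ← sup_assoc, ← Submodule.map_sup, hc'.sup_eq_top,
          Submodule.map_top, Submodule.range_subtype, ← codisjoint_iff]
        exact hc.codisjoint
      · exact indec_of_equiv (Submodule.equivMapOfInjective p.subtype
          (Submodule.injective_subtype p) p') hind
theorem ND_indec_summand {M N ι : Type} [Fintype ι] [AddCommGroup M] [Module k M] [Module A M]
    [IsScalarTower k A M] [FiniteDimensional k M] [AddCommGroup N] [Module A N]
    (hM : Indec A M) (I : M →ₗ[A] (ι → N)) (P : (ι → N) →ₗ[A] M) (hPI : ∀ m, P (I m) = m) :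
    ∃ (f : M →ₗ[A] N) (g : N →ₗ[A] M), ∀ m, g (f m) = m := by
  classical
  let h : ι → Module.End A M := fun j =>
    (P ∘ₗ LinearMap.single A (fun _ => N) j) ∘ₗ ((LinearMap.proj j) ∘ₗ I)
  have hsum : ∑ j, h j = (1 : Module.End A M) := by
    ext m
    rw [LinearMap.sum_apply, Module.End.one_apply]
    have h1 : ∀ j, (h j) m = P (Pi.single j (I m j)) := fun j => rfl
    rw [Finset.sum_congr rfl (fun j _ => h1 j), ← map_sum, Finset.univ_sum_single (I m), hPI]
  have hu : ∃ j ∈ Finset.univ, IsUnit (h j) := by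
    apply ND_exists_isUnit_of_sum (A := A) (M := M) k hM
    rw [hsum]; exact isUnit_one
  obtain ⟨j, -, hju⟩ := hu
  refine ⟨(LinearMap.proj j) ∘ₗ I, (↑hju.unit⁻¹ : Module.End A M) ∘ₗ
    (P ∘ₗ LinearMap.single A (fun _ => N) j), fun m => ?_⟩
  have h2 : (P ∘ₗ LinearMap.single A (fun _ => N) j) (((LinearMap.proj j) ∘ₗ I) m)
      = (h j) m := rfl
  have h3 : (h j) m = (↑hju.unit : Module.End A M) m := by rw [hju.unit_spec]
  rw [LinearMap.comp_apply, h2, h3, ← Module.End.mul_apply, hju.unit.inv_mul,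
    Module.End.one_apply]

section Cancel

variable {L X Y : Type} [AddCommGroup L] [Module k L] [Module A L]
    [IsScalarTower k A L] [FiniteDimensional k L]
    [AddCommGroup X] [Module A X] [AddCommGroup Y] [Module A Y]

include k in
theorem ND_cancel_of_isUnit
    (I : (L × X) →ₗ[A] (L × Y)) (P : (L × Y) →ₗ[A] (L × X))
    (hPI : ∀ z, P (I z) = z)
    (hu : IsUnit (((LinearMap.fst A L X ∘ₗ P ∘ₗ LinearMap.inl A L Y) ∘ₗ
      (LinearMap.fst A L Y ∘ₗ I ∘ₗ LinearMap.inl A L X) : Module.End A L))) :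
    ∃ (f : X →ₗ[A] Y) (g : Y →ₗ[A] X), ∀ x, g (f x) = x := by
  set a : L →ₗ[A] L := LinearMap.fst A L Y ∘ₗ I ∘ₗ LinearMap.inl A L X with ha
  set b : X →ₗ[A] L := LinearMap.fst A L Y ∘ₗ I ∘ₗ LinearMap.inr A L X with hb
  set c : L →ₗ[A] Y := LinearMap.snd A L Y ∘ₗ I ∘ₗ LinearMap.inl A L X with hc
  set e : X →ₗ[A] Y := LinearMap.snd A L Y ∘ₗ I ∘ₗ LinearMap.inr A L X with he
  set a' : L →ₗ[A] L := LinearMap.fst A L X ∘ₗ P ∘ₗ LinearMap.inl A L Y with ha'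
  set c' : Y →ₗ[A] L := LinearMap.fst A L X ∘ₗ P ∘ₗ LinearMap.inr A L Y with hc'
  set b' : L →ₗ[A] X := LinearMap.snd A L X ∘ₗ P ∘ₗ LinearMap.inl A L Y with hb'
  set e' : Y →ₗ[A] X := LinearMap.snd A L X ∘ₗ P ∘ₗ LinearMap.inr A L Y with he'
  have hI : ∀ (l : L) (x : X), I (l, x) = (a l + b x, c l + e x) := by
    intro l x
    have h0 : ((l, x) : L × X) = (l, 0) + (0, x) := by simp
    rw [h0, map_add]
    rfl
  have hP : ∀ (l : L) (y : Y), P (l, y) = (a' l + c' y, b' l + e' y) := by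
    intro l y
    have h0 : ((l, y) : L × Y) = (l, 0) + (0, y) := by simp
    rw [h0, map_add]
    rfl
  have h12 : ∀ l : L, a' (a l) + c' (c l) = l ∧ b' (a l) + e' (c l) = 0 := by
    intro l
    have hz := hPI (l, 0)
    rw [hI l 0, map_zero, map_zero, add_zero, add_zero, hP] at hz
    exact ⟨congrArg Prod.fst hz, congrArg Prod.snd hz⟩
  have h34 : ∀ x : X, a' (b x) + c' (e x) = 0 ∧ b' (b x) + e' (e x) = x := by
    intro x
    have hz := hPI (0, x)
    rw [hI 0 x, map_zero, map_zero, zero_add, zero_add, hP] at hz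
    exact ⟨congrArg Prod.fst hz, congrArg Prod.snd hz⟩
  have hbij := (Module.End.isUnit_iff _).mp hu
  have hainj : Function.Injective a := by
    intro x y hxy
    apply hbij.injective
    show a' (a x) = a' (a y)
    rw [hxy]
  haveI := ND_isArtinian (A := A) (M := L) k
  have hasurj : Function.Surjective a :=
    IsArtinian.surjective_of_injective_endomorphism a hainj
  let ea : L ≃ₗ[A] L := LinearEquiv.ofBijective a ⟨hainj, hasurj⟩
  refine ⟨e - c ∘ₗ (ea.symm : L ≃ₗ[A] L).toLinearMap ∘ₗ b, e', fun x => ?_⟩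
  have heac : ∀ z : L, a (ea.symm z) = z := fun z => ea.apply_symm_apply z
  have hl := (h12 (ea.symm (b x))).2
  rw [heac (b x)] at hl
  have h4x := (h34 x).2
  have hneg : e' (c (ea.symm (b x))) = -(b' (b x)) := by
    rw [eq_neg_iff_add_eq_zero, add_comm]
    exact hl
  simp only [LinearMap.sub_apply, LinearMap.comp_apply, LinearEquiv.coe_coe, map_sub]
  rw [hneg, sub_neg_eq_add, add_comm, h4x]

include k in
theorem ND_cancel_indec (hL : Indec A L)
    (I : (L × X) →ₗ[A] (L × Y)) (P : (L × Y) →ₗ[A] (L × X))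
    (hPI : ∀ z, P (I z) = z) :
    ∃ (f : X →ₗ[A] Y) (g : Y →ₗ[A] X), ∀ x, g (f x) = x := by
  set a : L →ₗ[A] L := LinearMap.fst A L Y ∘ₗ I ∘ₗ LinearMap.inl A L X with ha
  set c : L →ₗ[A] Y := LinearMap.snd A L Y ∘ₗ I ∘ₗ LinearMap.inl A L X with hc
  set a' : L →ₗ[A] L := LinearMap.fst A L X ∘ₗ P ∘ₗ LinearMap.inl A L Y with ha'
  set c' : Y →ₗ[A] L := LinearMap.fst A L X ∘ₗ P ∘ₗ LinearMap.inr A L Y with hc'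
  set b' : L →ₗ[A] X := LinearMap.snd A L X ∘ₗ P ∘ₗ LinearMap.inl A L Y with hb'
  set e' : Y →ₗ[A] X := LinearMap.snd A L X ∘ₗ P ∘ₗ LinearMap.inr A L Y with he'
  have hP : ∀ (l : L) (y : Y), P (l, y) = (a' l + c' y, b' l + e' y) := by
    intro l y
    have h0 : ((l, y) : L × Y) = (l, 0) + (0, y) := by simp
    rw [h0, map_add]
    rfl
  have hIl : ∀ l : L, I (l, 0) = (a l, c l) := fun l => rfl
  have h1 : ∀ l : L, a' (a l) + c' (c l) = l := by
    intro l
    have hz := hPI (l, 0)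
    rw [hIl l, hP] at hz
    exact congrArg Prod.fst hz
  have hsum : (a' ∘ₗ a) + (c' ∘ₗ c) = (1 : Module.End A L) := by
    ext l
    simpa using h1 l
  have hone : IsUnit ((a' ∘ₗ a) + (c' ∘ₗ c)) := by rw [hsum]; exact isUnit_one
  rcases ND_isUnit_or_isUnit (A := A) (M := L) k hL hone with hu | hu
  · exact ND_cancel_of_isUnit (k := k) I P hPI hu
  · -- conjugate by the involution ψ and reduce to the first case
    set w : Module.End A L := c' ∘ₗ c with hw
    set winv : Module.End A L := (↑hu.unit⁻¹ : Module.End A L) with hwinv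
    have hw1 : ∀ l, winv (w l) = l := by
      intro l
      rw [← Module.End.mul_apply, hu.val_inv_mul]
      exact Module.End.one_apply l
    have hw2 : ∀ l, w (winv l) = l := by
      intro l
      rw [← Module.End.mul_apply, hu.mul_val_inv]
      exact Module.End.one_apply l
    have hwc : ∀ l, winv (c' (c l)) = l := fun l => hw1 l
    have hcw : ∀ l, c' (c (winv l)) = l := fun l => hw2 l
    set ψ : (L × Y) →ₗ[A] (L × Y) := LinearMap.prod (winv ∘ₗ c' ∘ₗ LinearMap.snd A L Y)
      ((c ∘ₗ LinearMap.fst A L Y) + (LinearMap.snd A L Y)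
        - (c ∘ₗ winv ∘ₗ c' ∘ₗ LinearMap.snd A L Y)) with hψdef
    have hψ : ∀ (l : L) (y : Y), ψ (l, y) = (winv (c' y), c l + y - c (winv (c' y))) :=
      fun l y => rfl
    have hψψ : ∀ z : L × Y, ψ (ψ z) = z := by
      rintro ⟨l, y⟩
      rw [hψ, hψ]
      have hfirst : winv (c' (c l + y - c (winv (c' y)))) = l := by
        simp only [map_sub, map_add, hcw, hwc, add_sub_cancel_right]
      rw [hfirst]
      refine Prod.ext rfl ?_
      show c (winv (c' y)) + (c l + y - c (winv (c' y))) - c l = y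
      abel
    refine ND_cancel_of_isUnit (k := k) (ψ ∘ₗ I) (P ∘ₗ ψ) (fun z => ?_) ?_
    · rw [LinearMap.comp_apply, LinearMap.comp_apply, hψψ, hPI]
    · have hkey : ((LinearMap.fst A L X ∘ₗ (P ∘ₗ ψ) ∘ₗ LinearMap.inl A L Y) ∘ₗ
          (LinearMap.fst A L Y ∘ₗ (ψ ∘ₗ I) ∘ₗ LinearMap.inl A L X) : Module.End A L)
          = c' ∘ₗ c := by
        ext l
        show (LinearMap.fst A L X) (P (ψ ((LinearMap.fst A L Y) (ψ (I (l, 0))), 0)))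
          = c' (c l)
        rw [hIl l, hψ (a l) (c l)]
        show (LinearMap.fst A L X) (P (ψ (winv (c' (c l)), 0))) = c' (c l)
        rw [hwc l]
        have hψl0 : ψ (l, 0) = (0, c l) := by
          rw [hψ l 0]
          simp
        rw [hψl0, hP 0 (c l)]
        show a' 0 + c' (c l) = c' (c l)
        rw [map_zero, zero_add]
      rw [hkey]
      exact hu

end Cancel
theorem ND_cancel_subsingleton {L X Y : Type} [AddCommGroup L] [Module A L] [Subsingleton L]
    [AddCommGroup X] [Module A X] [AddCommGroup Y] [Module A Y]
    (I : (L × X) →ₗ[A] (L × Y)) (P : (L × Y) →ₗ[A] (L × X))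
    (hPI : ∀ z, P (I z) = z) :
    ∃ (f : X →ₗ[A] Y) (g : Y →ₗ[A] X), ∀ x, g (f x) = x := by
  refine ⟨LinearMap.snd A L Y ∘ₗ I ∘ₗ LinearMap.inr A L X,
    LinearMap.snd A L X ∘ₗ P ∘ₗ LinearMap.inr A L Y, fun x => ?_⟩
  have h1 : (((0 : L), (LinearMap.snd A L Y) (I (0, x))) : L × Y) = I (0, x) :=
    Prod.ext (Subsingleton.elim _ _) rfl
  show (LinearMap.snd A L X) (P (0, (LinearMap.snd A L Y) (I (0, x)))) = x
  rw [h1, hPI]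
  rfl

include k in
theorem ND_cancel (n : ℕ) : ∀ (L X Y : Type) [AddCommGroup L] [Module k L] [Module A L]
    [IsScalarTower k A L] [FiniteDimensional k L] [AddCommGroup X] [Module A X]
    [AddCommGroup Y] [Module A Y], finrank k L ≤ n →
    ∀ (I : (L × X) →ₗ[A] (L × Y)) (P : (L × Y) →ₗ[A] (L × X)), (∀ z, P (I z) = z) →
    ∃ (f : X →ₗ[A] Y) (g : Y →ₗ[A] X), ∀ x, g (f x) = x := by
  induction n with
  | zero =>
    intro L X Y _ _ _ _ _ _ _ _ _ hr I P hPI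
    haveI : Subsingleton L := by
      rw [← finrank_zero_iff (R := k) (M := L)]
      omega
    exact ND_cancel_subsingleton (A := A) I P hPI
  | succ n IH =>
    intro L X Y _ _ _ _ _ _ _ _ _ hr I P hPI
    by_cases hss : Subsingleton L
    · exact ND_cancel_subsingleton (A := A) I P hPI
    · haveI hnt : Nontrivial L := not_subsingleton_iff_nontrivial.mp hss
      obtain ⟨p, q, hc, hind⟩ :=
        ND_exists_indec_compl (k := k) (A := A) (n + 1) L hr hnt
      haveI : FiniteDimensional k ↥p := ND_findim_submodule p
      haveI : FiniteDimensional k ↥q := ND_findim_submodule q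
      let e : (↥p × ↥q) ≃ₗ[A] L := Submodule.prodEquivOfIsCompl p q hc
      let EX : (L × X) ≃ₗ[A] (↥p × (↥q × X)) :=
        (e.symm.prodCongr (LinearEquiv.refl A X)).trans (LinearEquiv.prodAssoc A ↥p ↥q X)
      let EY : (L × Y) ≃ₗ[A] (↥p × (↥q × Y)) :=
        (e.symm.prodCongr (LinearEquiv.refl A Y)).trans (LinearEquiv.prodAssoc A ↥p ↥q Y)
      let I2 : (↥p × (↥q × X)) →ₗ[A] (↥p × (↥q × Y)) :=
        EY.toLinearMap ∘ₗ I ∘ₗ EX.symm.toLinearMap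
      let P2 : (↥p × (↥q × Y)) →ₗ[A] (↥p × (↥q × X)) :=
        EX.toLinearMap ∘ₗ P ∘ₗ EY.symm.toLinearMap
      have hPI2 : ∀ z, P2 (I2 z) = z := by
        intro z
        show EX (P (EY.symm (EY (I (EX.symm z))))) = z
        rw [EY.symm_apply_apply, hPI, EX.apply_symm_apply]
      obtain ⟨f1, g1, hfg1⟩ := ND_cancel_indec (k := k) (A := A) hind I2 P2 hPI2
      have hq : finrank k ↥q ≤ n := by
        have hpbot : p ≠ ⊥ := by
          intro hbot
          haveI := hind.1
          rw [hbot] at hind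
          obtain ⟨x, y, hxy⟩ := hind.1
          exact hxy (Subsingleton.elim x y)
        have hqtop : q ≠ ⊤ := by
          intro htop
          apply hpbot
          have hd := hc.disjoint
          rw [htop, disjoint_top] at hd
          exact hd
        have := ND_finrank_lt (k := k) (A := A) hqtop
        omega
      exact IH ↥q X Y hq f1 g1 hfg1

theorem ND_isCompl_range_ker {M₁ N : Type} [AddCommGroup M₁] [Module A M₁]
    [AddCommGroup N] [Module A N] (f : M₁ →ₗ[A] N) (g : N →ₗ[A] M₁)
    (h : ∀ m, g (f m) = m) : IsCompl (LinearMap.range f) (LinearMap.ker g) := by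
  constructor
  · rw [disjoint_iff, Submodule.eq_bot_iff]
    rintro x ⟨⟨m, rfl⟩, hker⟩
    have : m = 0 := by rw [← h m]; exact hker
    rw [this, map_zero]
  · rw [codisjoint_iff, Submodule.eq_top_iff']
    intro x
    rw [Submodule.mem_sup]
    refine ⟨f (g x), ⟨g x, rfl⟩, x - f (g x), ?_, by abel⟩
    rw [LinearMap.mem_ker, map_sub, h (g x), sub_self]

include k in
theorem ND_core (n : ℕ) : ∀ (M N : Type) [AddCommGroup M] [Module k M] [Module A M]
    [IsScalarTower k A M] [FiniteDimensional k M] [AddCommGroup N] [Module A N]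
    (ι : Type) [Fintype ι] [Nonempty ι], finrank k M ≤ n →
    ∀ (I : (ι → M) →ₗ[A] (ι → N)) (P : (ι → N) →ₗ[A] (ι → M)), (∀ z, P (I z) = z) →
    ∃ (f : M →ₗ[A] N) (g : N →ₗ[A] M), ∀ m, g (f m) = m := by
  induction n with
  | zero =>
    intro M N _ _ _ _ _ _ _ ι _ _ hr I P hPI
    haveI : Subsingleton M := by
      rw [← finrank_zero_iff (R := k) (M := M)]
      omega
    exact ⟨0, 0, fun m => Subsingleton.elim _ _⟩
  | succ n IH =>
    intro M N _ _ _ _ _ _ _ ι _ _ hr I P hPI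
    classical
    by_cases hss : Subsingleton M
    · exact ⟨0, 0, fun m => Subsingleton.elim _ _⟩
    haveI hnt : Nontrivial M := not_subsingleton_iff_nontrivial.mp hss
    obtain ⟨p, q, hc, hind⟩ := ND_exists_indec_compl (k := k) (A := A) (n + 1) M hr hnt
    haveI : FiniteDimensional k ↥p := ND_findim_submodule p
    haveI : FiniteDimensional k ↥q := ND_findim_submodule q
    let e : (↥p × ↥q) ≃ₗ[A] M := Submodule.prodEquivOfIsCompl p q hc
    -- Step 1: p is a direct summand of N
    obtain ⟨j₀⟩ := ‹Nonempty ι›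
    let ι₁ : ↥p →ₗ[A] M := e.toLinearMap ∘ₗ LinearMap.inl A ↥p ↥q
    let π₁ : M →ₗ[A] ↥p := LinearMap.fst A ↥p ↥q ∘ₗ e.symm.toLinearMap
    let I₁ : ↥p →ₗ[A] (ι → N) := I ∘ₗ LinearMap.single A (fun _ => M) j₀ ∘ₗ ι₁
    let P₁ : (ι → N) →ₗ[A] ↥p := π₁ ∘ₗ LinearMap.proj j₀ ∘ₗ P
    have hPI₁ : ∀ m, P₁ (I₁ m) = m := by
      intro m
      show π₁ ((P (I (Pi.single j₀ (ι₁ m)))) j₀) = m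
      rw [hPI, Pi.single_eq_same]
      show (LinearMap.fst A ↥p ↥q) (e.symm (e (m, 0))) = m
      rw [e.symm_apply_apply]
      rfl
    obtain ⟨f₁, g₁, hfg₁⟩ := ND_indec_summand (k := k) (A := A) hind I₁ P₁ hPI₁
    have hf₁inj : Function.Injective f₁ := by
      intro x y hxy
      rw [← hfg₁ x, ← hfg₁ y, hxy]
    have hcN : IsCompl (LinearMap.range f₁) (LinearMap.ker g₁) :=
      ND_isCompl_range_ker (A := A) f₁ g₁ hfg₁
    let N₂ := LinearMap.ker g₁
    let eN : (↥p × ↥N₂) ≃ₗ[A] N :=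
      ((LinearEquiv.ofInjective f₁ hf₁inj).prodCongr (LinearEquiv.refl A ↥N₂)).trans
        (Submodule.prodEquivOfIsCompl _ _ hcN)
    -- Step 2: cancellation at the level of ι-fold products
    let piProd : ∀ (P1 Q1 : Type) [AddCommGroup P1] [Module A P1] [AddCommGroup Q1]
      [Module A Q1], (ι → (P1 × Q1)) ≃ₗ[A] ((ι → P1) × (ι → Q1)) := fun P1 Q1 _ _ _ _ =>
      { toFun := fun x => (fun i => (x i).1, fun i => (x i).2)
        invFun := fun y i => (y.1 i, y.2 i)
        map_add' := fun x y => rfl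
        map_smul' := fun r x => rfl
        left_inv := fun x => rfl
        right_inv := fun y => rfl }
    let ΦM : (ι → M) ≃ₗ[A] ((ι → ↥p) × (ι → ↥q)) :=
      (LinearEquiv.piCongrRight (fun _ : ι => e.symm)).trans (piProd ↥p ↥q)
    let ΦN : (ι → N) ≃ₗ[A] ((ι → ↥p) × (ι → ↥N₂)) :=
      (LinearEquiv.piCongrRight (fun _ : ι => eN.symm)).trans (piProd ↥p ↥N₂)
    let I2 : ((ι → ↥p) × (ι → ↥q)) →ₗ[A] ((ι → ↥p) × (ι → ↥N₂)) :=
      ΦN.toLinearMap ∘ₗ I ∘ₗ ΦM.symm.toLinearMap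
    let P2 : ((ι → ↥p) × (ι → ↥N₂)) →ₗ[A] ((ι → ↥p) × (ι → ↥q)) :=
      ΦM.toLinearMap ∘ₗ P ∘ₗ ΦN.symm.toLinearMap
    have hPI2 : ∀ z, P2 (I2 z) = z := by
      intro z
      show ΦM (P (ΦN.symm (ΦN (I (ΦM.symm z))))) = z
      rw [ΦN.symm_apply_apply, hPI, ΦM.apply_symm_apply]
    obtain ⟨F, G, hFG⟩ := ND_cancel (k := k) (A := A) (finrank k (ι → ↥p))
      (ι → ↥p) (ι → ↥q) (ι → ↥N₂) le_rfl I2 P2 hPI2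
    -- Step 3: recurse on q
    have hq : finrank k ↥q ≤ n := by
      have hpbot : p ≠ ⊥ := by
        intro hbot
        haveI := hind.1
        rw [hbot] at hind
        obtain ⟨x, y, hxy⟩ := hind.1
        exact hxy (Subsingleton.elim x y)
      have hqtop : q ≠ ⊤ := by
        intro htop
        apply hpbot
        have hd := hc.disjoint
        rw [htop, disjoint_top] at hd
        exact hd
      have := ND_finrank_lt (k := k) (A := A) hqtop
      omega
    obtain ⟨f₂, g₂, hfg₂⟩ := IH ↥q ↥N₂ ι hq F G hFG
    -- Step 4: assemble
    refine ⟨eN.toLinearMap ∘ₗ LinearMap.prodMap LinearMap.id f₂ ∘ₗ e.symm.toLinearMap,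
      e.toLinearMap ∘ₗ LinearMap.prodMap LinearMap.id g₂ ∘ₗ eN.symm.toLinearMap,
      fun m => ?_⟩
    show e (LinearMap.prodMap LinearMap.id g₂
      (eN.symm (eN (LinearMap.prodMap LinearMap.id f₂ (e.symm m))))) = m
    rw [eN.symm_apply_apply]
    have hpm : ∀ z : ↥p × ↥q, (LinearMap.prodMap LinearMap.id g₂)
        ((LinearMap.prodMap LinearMap.id f₂) z) = z := by
      rintro ⟨z1, z2⟩
      simp [LinearMap.prodMap_apply, hfg₂]
    rw [hpm, e.apply_symm_apply]
noncomputable section T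

variable {k G V W : Type} [Field k] [Group G] [AddCommGroup V] [Module k V]
  [AddCommGroup W] [Module k W]

instance ndAcg (ρ : Representation k G V) : AddCommGroup ρ.asModule :=
  inferInstanceAs (AddCommGroup V)

instance ndTower (ρ : Representation k G V) :
    IsScalarTower k (MonoidAlgebra k G) ρ.asModule :=
  ⟨fun c x v => by
    show ρ.asAlgebraHom (c • x) v = c • (ρ.asAlgebraHom x v)
    rw [map_smul]
    rfl⟩

instance ndFd [FiniteDimensional k V] (ρ : Representation k G V) :
    FiniteDimensional k ρ.asModule :=
  inferInstanceAs (FiniteDimensional k V)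

variable (ρ : Representation k G V) (σ : Representation k G W)

/-- Convert an equivariant family-level linear map to a `MonoidAlgebra`-linear map. -/
def ndToMod {ι : Type} (φ : (ι → V) →ₗ[k] (ι → W))
    (hφ : ∀ (g : G) (u : ι → V), φ (fun i => ρ g (u i)) = fun i => σ g (φ u i)) :
    (ι → ρ.asModule) →ₗ[MonoidAlgebra k G] (ι → σ.asModule) where
  toFun := fun u => φ u
  map_add' := fun u v => φ.map_add u v
  map_smul' := by
    intro x u
    let μ₀ : MonoidAlgebra k G →ₗ[k] (ι → V) :=
      LinearMap.pi (fun i => (LinearMap.applyₗ (u i : V)) ∘ₗ ρ.asAlgebraHom.toLinearMap)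
    let μ₁ : MonoidAlgebra k G →ₗ[k] (ι → W) := φ ∘ₗ μ₀
    let μ₂ : MonoidAlgebra k G →ₗ[k] (ι → W) :=
      LinearMap.pi (fun i => (LinearMap.applyₗ (φ (fun j => (u j : V)) i)) ∘ₗ
        σ.asAlgebraHom.toLinearMap)
    have hext : μ₁ = μ₂ := by
      refine MonoidAlgebra.lhom_ext' fun g => LinearMap.ext fun c => ?_
      show φ (fun i => ρ.asAlgebraHom (MonoidAlgebra.single g c) (u i)) =
        fun i => σ.asAlgebraHom (MonoidAlgebra.single g c) (φ (fun j => (u j : V)) i)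
      have h1 : (fun i => ρ.asAlgebraHom (MonoidAlgebra.single g c) (u i)) =
          c • fun i => ρ g (u i) := by
        funext i
        rw [Representation.asAlgebraHom_single]
        rfl
      rw [h1, map_smul]
      erw [hφ]
      funext i
      rw [Representation.asAlgebraHom_single]
      rfl
    exact congrFun (congrArg (fun F => F.toFun) hext) x

theorem ndToMod_apply {ι : Type} (φ : (ι → V) →ₗ[k] (ι → W)) (hφ) (u : ι → ρ.asModule) :
    ndToMod ρ σ φ hφ u = φ (fun i => (u i : V)) := rfl

/-- Convert a `MonoidAlgebra`-linear map back to an equivariant `k`-linear map. -/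
def ndOfMod (f : ρ.asModule →ₗ[MonoidAlgebra k G] σ.asModule) : V →ₗ[k] W where
  toFun := fun v => f v
  map_add' := fun v v' => f.map_add v v'
  map_smul' := by
    intro c v
    let vM : ρ.asModule := v
    have h1 : (c • vM : ρ.asModule) = (MonoidAlgebra.single (1 : G) c : MonoidAlgebra k G) • vM := by
      show c • v = ρ.asAlgebraHom (MonoidAlgebra.single 1 c) v
      rw [Representation.asAlgebraHom_single, map_one]
      rfl
    show f (c • vM) = c • f vM
    rw [h1, f.map_smul]
    show σ.asAlgebraHom (MonoidAlgebra.single 1 c) (f vM) = c • f vM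
    rw [Representation.asAlgebraHom_single, map_one]
    rfl

theorem ndOfMod_equivariant (f : ρ.asModule →ₗ[MonoidAlgebra k G] σ.asModule) (g : G) (v : V) :
    ndOfMod ρ σ f (ρ g v) = σ g (ndOfMod ρ σ f v) := by
  let vM : ρ.asModule := v
  have h1 : (show ρ.asModule from ρ g v) = (MonoidAlgebra.single g (1 : k) : MonoidAlgebra k G) • vM := by
    show ρ g v = ρ.asAlgebraHom (MonoidAlgebra.single g 1) v
    rw [Representation.asAlgebraHom_single_one]
  show f (show ρ.asModule from ρ g v) = σ g (f vM)
  rw [h1, f.map_smul]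
  show σ.asAlgebraHom (MonoidAlgebra.single g 1) (f vM) = σ g (f vM)
  rw [Representation.asAlgebraHom_single_one]

variable {k k' V W : Type} [Field k] [Field k'] [Algebra k k'] [FiniteDimensional k k']
  [AddCommGroup V] [Module k V] [AddCommGroup W] [Module k W]

def ndBC : (k' ⊗[k] V) ≃ₗ[k] (Fin (finrank k k') → V) :=
  (TensorProduct.congr (Module.finBasis k k').repr (LinearEquiv.refl k V)).trans
    ((TensorProduct.finsuppScalarLeft k V (Fin (finrank k k'))).trans
      (Finsupp.linearEquivFunOnFinite k V (Fin (finrank k k'))))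

theorem ndBC_tmul (x : k') (v : V) (i : Fin (finrank k k')) :
    ndBC (x ⊗ₜ[k] v) i = (Module.finBasis k k').repr x i • v := by
  simp [ndBC]

theorem ndBC_nat (f : V →ₗ[k] W) (t : k' ⊗[k] V) :
    ndBC (LinearMap.baseChange k' f t) = fun i => f (ndBC t i) := by
  induction t with
  | zero => simp only [map_zero]; funext i; simp
  | tmul x v =>
    funext i
    rw [LinearMap.baseChange_tmul, ndBC_tmul, ndBC_tmul, map_smul]
  | add t1 t2 h1 h2 =>
    rw [map_add, map_add, h1, h2]
    funext i
    simp
/-- Noether–Deuring: For a finite field extension `k ⊆ k'`, a finite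
group `G`, and finitely generated `kG`-modules `M`, `N`, if `k' ⊗_k M` is a direct
summand of `k' ⊗_k N` as `k'G`-modules, then `M` is a direct summand of `N` as
`kG`-modules. -/
theorem statement_7 (k k' G : Type) [Field k] [Field k'] [Algebra k k']
    [FiniteDimensional k k'] [Group G] [Finite G]
    (V W : Type) [AddCommGroup V] [Module k V] [AddCommGroup W] [Module k W]
    [FiniteDimensional k V] [FiniteDimensional k W]
    (ρ : Representation k G V) (σ : Representation k G W)
    (h : ∃ (i : (k' ⊗[k] V) →ₗ[k'] (k' ⊗[k] W)) (pr : (k' ⊗[k] W) →ₗ[k'] (k' ⊗[k] V)),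
      (∀ g, i ∘ₗ LinearMap.baseChange k' (ρ g) = LinearMap.baseChange k' (σ g) ∘ₗ i) ∧
      (∀ g, pr ∘ₗ LinearMap.baseChange k' (σ g) = LinearMap.baseChange k' (ρ g) ∘ₗ pr) ∧
      pr ∘ₗ i = LinearMap.id) :
    ∃ (i : V →ₗ[k] W) (pr : W →ₗ[k] V),
      (∀ g, i ∘ₗ ρ g = σ g ∘ₗ i) ∧ (∀ g, pr ∘ₗ σ g = ρ g ∘ₗ pr) ∧
      pr ∘ₗ i = LinearMap.id := by
  obtain ⟨i, pr, hi, hpr, hpi⟩ := h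
  haveI : Nonempty (Fin (Module.finrank k k')) := ⟨⟨0, Module.finrank_pos⟩⟩
  let eV : (k' ⊗[k] V) ≃ₗ[k] (Fin (Module.finrank k k') → V) := ndBC
  let eW : (k' ⊗[k] W) ≃ₗ[k] (Fin (Module.finrank k k') → W) := ndBC
  let I' : (Fin (Module.finrank k k') → V) →ₗ[k] (Fin (Module.finrank k k') → W) :=
    eW.toLinearMap ∘ₗ (i.restrictScalars k) ∘ₗ eV.symm.toLinearMap
  let P' : (Fin (Module.finrank k k') → W) →ₗ[k] (Fin (Module.finrank k k') → V) :=
    eV.toLinearMap ∘ₗ (pr.restrictScalars k) ∘ₗ eW.symm.toLinearMap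
  have hI'equi : ∀ (g : G) (u : Fin (Module.finrank k k') → V),
      I' (fun j => ρ g (u j)) = fun j => σ g (I' u j) := by
    intro g u
    have h1 : (fun j => ρ g (u j)) = eV (LinearMap.baseChange k' (ρ g) (eV.symm u)) := by
      rw [ndBC_nat]
      funext j
      rw [eV.apply_symm_apply]
    rw [h1]
    show eW (i (eV.symm (eV _))) = _
    rw [eV.symm_apply_apply]
    have h2 : i ((LinearMap.baseChange k' (ρ g)) (eV.symm u))
        = LinearMap.baseChange k' (σ g) (i (eV.symm u)) :=
      LinearMap.congr_fun (hi g) (eV.symm u)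
    rw [h2]
    show eW (LinearMap.baseChange k' (σ g) (i (eV.symm u))) = _
    rw [ndBC_nat]
    rfl
  have hP'equi : ∀ (g : G) (u : Fin (Module.finrank k k') → W),
      P' (fun j => σ g (u j)) = fun j => ρ g (P' u j) := by
    intro g u
    have h1 : (fun j => σ g (u j)) = eW (LinearMap.baseChange k' (σ g) (eW.symm u)) := by
      rw [ndBC_nat]
      funext j
      rw [eW.apply_symm_apply]
    rw [h1]
    show eV (pr (eW.symm (eW _))) = _
    rw [eW.symm_apply_apply]
    have h2 : pr ((LinearMap.baseChange k' (σ g)) (eW.symm u))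
        = LinearMap.baseChange k' (ρ g) (pr (eW.symm u)) :=
      LinearMap.congr_fun (hpr g) (eW.symm u)
    rw [h2]
    show eV (LinearMap.baseChange k' (ρ g) (pr (eW.symm u))) = _
    rw [ndBC_nat]
    rfl
  have hP'I' : ∀ u, P' (I' u) = u := by
    intro u
    show eV (pr (eW.symm (eW (i (eV.symm u))))) = u
    rw [eW.symm_apply_apply]
    have h2 : pr (i (eV.symm u)) = eV.symm u := LinearMap.congr_fun hpi (eV.symm u)
    rw [h2, eV.apply_symm_apply]
  let Ihat := ndToMod ρ σ I' hI'equi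
  let Phat := ndToMod σ ρ P' hP'equi
  have hPIhat : ∀ z, Phat (Ihat z) = z := fun z => hP'I' z
  obtain ⟨fhat, ghat, hfg⟩ := ND_core (k := k) (A := MonoidAlgebra k G)
    (Module.finrank k ρ.asModule) ρ.asModule σ.asModule (Fin (Module.finrank k k'))
    le_rfl Ihat Phat hPIhat
  refine ⟨ndOfMod ρ σ fhat, ndOfMod σ ρ ghat, ?_, ?_, ?_⟩
  · intro g
    ext v
    exact ndOfMod_equivariant ρ σ fhat g v
  · intro g
    ext w
    exact ndOfMod_equivariant σ ρ ghat g w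
  · ext v
    exact hfg v

end T

end ND

end
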